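/- Fix an integer n ≥ 1 and k ∈ {0, 1, …, 2n}. Let P be a real polynomial of degree at most 2n, let Q be a real polynomial of degree exactly 2n that is strictly positive at every point of ℝ, let u, v ∈ V_{2n−1}, and let θ : ℝ → ℝ be Lebesgue-measurable with θ(x) > 0 for all x and ∫ (1+|x|^{2n}) θ(x) dx < ∞. Then there exists δ > 0 such that for all ε with |ε| < δ the polynomial Q + εv is strictly positive on ℝ, and the map ε ↦ ∫_ℝ x^k (P(x)+εu(x))/(Q(x)+εv(x)) θ(x) dx is differentiable at ε = 0 with derivative ∫_ℝ x^k ( u(x)Q(x) − v(x)P(x) ) θ(x)/Q(x)² dx. -/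

import Mathlib

open MeasureTheory Polynomial Real Filter Topology

private lemma aux_eval_comp_neg (A : Polynomial ℝ) (x : ℝ) :
    (A.comp (-X)).eval x = A.eval (-x) := by
  simp [eval_comp]

private lemma aux_degree_comp_neg (A : Polynomial ℝ) :
    (A.comp (-X : Polynomial ℝ)).degree = A.degree := by
  rcases eq_or_ne A 0 with rfl | hA
  · simp
  have h1 : (-X : Polynomial ℝ) ≠ 0 := by
    intro h; simpa using congrArg (fun p => Polynomial.coeff p 1) h
  have hc : A.comp (-X : Polynomial ℝ) ≠ 0 := by
    intro hcz
    rcases Polynomial.comp_eq_zero_iff.mp hcz with h' | ⟨h', h''⟩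
    · exact hA h'
    · simpa using congrArg (fun p => Polynomial.coeff p 1) h''
  rw [Polynomial.degree_eq_natDegree hA, Polynomial.degree_eq_natDegree hc,
    Polynomial.natDegree_comp]
  simp [Polynomial.natDegree_neg]

/-- If `B` is everywhere positive and `deg A ≤ deg B`, then `|A| ≤ M·B` globally. -/
private lemma aux_poly_div_bound (A B : Polynomial ℝ) (hB : ∀ x, 0 < B.eval x)
    (h : A.degree ≤ B.degree) : ∃ M > 0, ∀ x, |A.eval x| ≤ M * B.eval x := by
  have hBne : ∀ x, B.eval x ≠ 0 := fun x => (hB x).ne'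
  set f : ℝ → ℝ := fun x => A.eval x / B.eval x with hf
  have htop : ∃ L, Tendsto f atTop (𝓝 L) := by
    rcases h.lt_or_eq with hlt | heq
    · exact ⟨0, Polynomial.div_tendsto_zero_of_degree_lt A B hlt⟩
    · exact ⟨_, Polynomial.div_tendsto_leadingCoeff_div_of_degree_eq _ _ heq⟩
  have hbot : ∃ L, Tendsto f atBot (𝓝 L) := by
    have hdeg' : (A.comp (-X : Polynomial ℝ)).degree ≤ (B.comp (-X : Polynomial ℝ)).degree := by
      rw [aux_degree_comp_neg, aux_degree_comp_neg]; exact h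
    have h2 : ∃ L, Tendsto (fun x => (A.comp (-X : Polynomial ℝ)).eval x /
        (B.comp (-X : Polynomial ℝ)).eval x) atTop (𝓝 L) := by
      rcases hdeg'.lt_or_eq with hlt | heq
      · exact ⟨0, Polynomial.div_tendsto_zero_of_degree_lt _ _ hlt⟩
      · exact ⟨_, Polynomial.div_tendsto_leadingCoeff_div_of_degree_eq _ _ heq⟩
    obtain ⟨L, hL⟩ := h2
    refine ⟨L, ?_⟩
    have hneg : Tendsto (fun x : ℝ => -x) atBot atTop := tendsto_neg_atBot_atTop
    have := hL.comp hneg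
    simpa [Function.comp_def, aux_eval_comp_neg, hf, neg_neg] using this
  obtain ⟨L1, h1⟩ := htop
  obtain ⟨L2, h2⟩ := hbot
  have e1 : ∀ᶠ x in atTop, |f x| < |L1| + 1 :=
    (h1.abs).eventually_lt_const (by linarith [abs_nonneg L1])
  have e2 : ∀ᶠ x in atBot, |f x| < |L2| + 1 :=
    (h2.abs).eventually_lt_const (by linarith [abs_nonneg L2])
  obtain ⟨a, ha⟩ := eventually_atTop.1 e1
  obtain ⟨b, hb⟩ := eventually_atBot.1 e2
  have hcont : ContinuousOn f (Set.Icc b a) :=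
    (Polynomial.continuous A).continuousOn.div (Polynomial.continuous B).continuousOn
      (fun x _ => hBne x)
  obtain ⟨C, hC⟩ := (isCompact_Icc).exists_bound_of_continuousOn hcont
  set M : ℝ := max (max (|L1| + 1) (|L2| + 1)) C + 1 with hM
  have hMpos : 0 < M := by
    have : (0:ℝ) ≤ max (max (|L1| + 1) (|L2| + 1)) C :=
      le_trans (by positivity) (le_trans (le_max_left _ _) (le_max_left _ _))
    linarith
  refine ⟨M, hMpos, fun x => ?_⟩
  have hfb : |f x| ≤ M := by
    rcases le_or_gt a x with hx | hx
    · have := ha x hx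
      nlinarith [le_max_left (|L1|+1) (|L2|+1), le_max_left (max (|L1|+1) (|L2|+1)) C]
    · rcases le_or_gt x b with hx' | hx'
      · have := hb x hx'
        nlinarith [le_max_right (|L1|+1) (|L2|+1), le_max_left (max (|L1|+1) (|L2|+1)) C]
      · have hmem : x ∈ Set.Icc b a := ⟨hx'.le, hx.le⟩
        have := hC x hmem
        rw [Real.norm_eq_abs] at this
        nlinarith [le_max_right (max (|L1|+1) (|L2|+1)) C]
  have hAx : A.eval x = f x * B.eval x := by
    simp only [hf]
    rw [div_mul_cancel₀ _ (hBne x)]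
  rw [hAx, abs_mul, abs_of_pos (hB x)]
  exact mul_le_mul_of_nonneg_right hfb (hB x).le

private lemma aux_abs_pow_le (x : ℝ) (k m : ℕ) (hk : k ≤ m) : |x| ^ k ≤ 1 + |x| ^ m := by
  rcases le_or_gt |x| 1 with h | h
  · have h1 : |x| ^ k ≤ 1 := pow_le_one₀ (abs_nonneg x) h
    have h2 : (0:ℝ) ≤ |x| ^ m := by positivity
    linarith
  · have : |x| ^ k ≤ |x| ^ m := pow_le_pow_right₀ h.le hk
    linarith

/-- Directional derivative of the power moment functional
`h_k(P,Q) = ∫ x^k P(x)θ(x)/Q(x) dx` in the direction `(u,v) ∈ V_{2n−1} × V_{2n−1}`: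
it equals `∫ x^k (uQ − vP) θ / Q² dx`; moreover for small `ε` the perturbed denominator
remains positive. -/
theorem powerMoment_directional_derivative
    (n k : ℕ) (hn : 1 ≤ n) (hk : k ≤ 2 * n)
    (P Q : Polynomial ℝ)
    (hPdeg : P.natDegree ≤ 2 * n) (hQdeg : Q.natDegree = 2 * n)
    (hQpos : ∀ x : ℝ, 0 < Q.eval x)
    (u v : Polynomial ℝ)
    (hu : u ∈ Polynomial.degreeLT ℝ (2 * n)) (hv : v ∈ Polynomial.degreeLT ℝ (2 * n))
    (θ : ℝ → ℝ) (hθmeas : Measurable θ) (hθpos : ∀ x, 0 < θ x)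
    (hθint : Integrable (fun x : ℝ => (1 + |x| ^ (2 * n)) * θ x)) :
    ∃ δ > (0 : ℝ),
      (∀ ε : ℝ, |ε| < δ → ∀ x : ℝ, 0 < (Q + ε • v).eval x) ∧
      HasDerivAt
        (fun ε : ℝ => ∫ x : ℝ, x ^ k * ((P + ε • u).eval x / (Q + ε • v).eval x) * θ x)
        (∫ x : ℝ, x ^ k * (u.eval x * Q.eval x - v.eval x * P.eval x) * θ x
          / (Q.eval x) ^ 2) 0 := by
  have hQne : Q ≠ 0 := by
    intro h
    have := hQpos 0
    rw [h] at this
    simp at this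
  have hQdeg' : Q.degree = ((2 * n : ℕ) : WithBot ℕ) :=
    by rw [Polynomial.degree_eq_natDegree hQne, hQdeg]
  have hudeg : u.degree < ((2 * n : ℕ) : WithBot ℕ) := Polynomial.mem_degreeLT.mp hu
  have hvdeg : v.degree < ((2 * n : ℕ) : WithBot ℕ) := Polynomial.mem_degreeLT.mp hv
  have hPdeg' : P.degree ≤ ((2 * n : ℕ) : WithBot ℕ) :=
    Polynomial.degree_le_natDegree.trans (by exact_mod_cast hPdeg)
  -- bound for v against Q
  obtain ⟨Mv, hMv, hMvb⟩ := aux_poly_div_bound v Q hQpos (hQdeg' ▸ hvdeg.le)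
  -- bound for P against Q
  obtain ⟨Mp, hMp, hMpb⟩ := aux_poly_div_bound P Q hQpos (hQdeg' ▸ hPdeg')
  -- bound for uQ - vP against Q²
  have hQ2pos : ∀ x, 0 < (Q ^ 2).eval x := fun x => by
    simpa [Polynomial.eval_pow] using pow_pos (hQpos x) 2
  have hWdeg : (u * Q - v * P).degree ≤ (Q ^ 2).degree := by
    rw [pow_two, Polynomial.degree_mul, hQdeg']
    refine (Polynomial.degree_sub_le _ _).trans (max_le ?_ ?_)
    · exact (Polynomial.degree_mul_le _ _).trans (add_le_add hudeg.le (le_of_eq hQdeg'))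
    · exact (Polynomial.degree_mul_le _ _).trans (add_le_add hvdeg.le hPdeg')
  obtain ⟨Mw, hMw, hMwb⟩ := aux_poly_div_bound (u * Q - v * P) (Q ^ 2) hQ2pos hWdeg
  set δ : ℝ := 1 / (2 * Mv) with hδdef
  have hδ : 0 < δ := by positivity
  -- key lower bound on the perturbed denominator
  have hlow : ∀ ε : ℝ, |ε| < δ → ∀ x : ℝ, Q.eval x / 2 ≤ (Q + ε • v).eval x := by
    intro ε hε x
    have hev : (Q + ε • v).eval x = Q.eval x + ε * v.eval x := by simp [smul_eq_mul]
    have h1 : |ε * v.eval x| ≤ Q.eval x / 2 := by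
      rw [abs_mul]
      calc |ε| * |v.eval x| ≤ δ * (Mv * Q.eval x) := by
            apply mul_le_mul hε.le (hMvb x) (abs_nonneg _)
            exact hδ.le
        _ = Q.eval x / 2 := by
            rw [hδdef]; field_simp
    have h2 := neg_abs_le (ε * v.eval x)
    rw [hev]; linarith
  have hpos : ∀ ε : ℝ, |ε| < δ → ∀ x : ℝ, 0 < (Q + ε • v).eval x := by
    intro ε hε x
    have := hlow ε hε x
    have := hQpos x
    linarith
  refine ⟨δ, hδ, hpos, ?_⟩
  -- measurability of the integrands
  have hmeasF : ∀ ε : ℝ, AEStronglyMeasurable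
      (fun x : ℝ => x ^ k * ((P + ε • u).eval x / (Q + ε • v).eval x) * θ x) volume := by
    intro ε
    exact (((measurable_id.pow_const k).mul
      (((Polynomial.continuous _).measurable).div
        ((Polynomial.continuous _).measurable))).mul hθmeas).aestronglyMeasurable
  have hmeasF' : ∀ ε : ℝ, AEStronglyMeasurable
      (fun x : ℝ => x ^ k * ((u * Q - v * P).eval x / ((Q + ε • v).eval x) ^ 2) * θ x)
      volume := by
    intro ε
    exact (((measurable_id.pow_const k).mul
      (((Polynomial.continuous _).measurable).div
        (((Polynomial.continuous _).measurable).pow_const 2))).mul hθmeas).aestronglyMeasurable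
  -- integrability at ε = 0
  have hint0 : Integrable
      (fun x : ℝ => x ^ k * ((P + (0:ℝ) • u).eval x / (Q + (0:ℝ) • v).eval x) * θ x) := by
    refine Integrable.mono' (hθint.const_mul Mp) (hmeasF 0) ?_
    filter_upwards with x
    simp only [zero_smul, add_zero]
    rw [Real.norm_eq_abs, abs_mul, abs_mul, abs_pow, abs_div,
      abs_of_pos (hQpos x), abs_of_pos (hθpos x)]
    have hdiv : |P.eval x| / Q.eval x ≤ Mp := (div_le_iff₀ (hQpos x)).2 (hMpb x)
    have habs : |x| ^ k ≤ 1 + |x| ^ (2 * n) := aux_abs_pow_le x k (2 * n) hk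
    calc |x| ^ k * (|P.eval x| / Q.eval x) * θ x
        ≤ (1 + |x| ^ (2 * n)) * Mp * θ x := by
          apply mul_le_mul_of_nonneg_right _ (hθpos x).le
          apply mul_le_mul habs hdiv (div_nonneg (abs_nonneg _) (hQpos x).le) (by positivity)
      _ = Mp * ((1 + |x| ^ (2 * n)) * θ x) := by ring
  -- uniform bound on the derivative integrand
  have hbound : ∀ᵐ x : ℝ, ∀ ε ∈ Metric.ball (0:ℝ) δ,
      ‖x ^ k * ((u * Q - v * P).eval x / ((Q + ε • v).eval x) ^ 2) * θ x‖
        ≤ (4 * Mw) * ((1 + |x| ^ (2 * n)) * θ x) := by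
    filter_upwards with x
    intro ε hε
    rw [Metric.mem_ball, Real.dist_eq, sub_zero] at hε
    have hD : Q.eval x / 2 ≤ (Q + ε • v).eval x := hlow ε hε x
    have hDpos : 0 < (Q + ε • v).eval x := hpos ε hε x
    have hQx := hQpos x
    have hsq : (Q.eval x) ^ 2 ≤ 4 * ((Q + ε • v).eval x) ^ 2 := by nlinarith
    have hW := hMwb x
    rw [Polynomial.eval_pow] at hW
    have hWb : |(u * Q - v * P).eval x| ≤ (4 * Mw) * ((Q + ε • v).eval x) ^ 2 := by
      nlinarith
    have hdiv : |(u * Q - v * P).eval x| / ((Q + ε • v).eval x) ^ 2 ≤ 4 * Mw :=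
      (div_le_iff₀ (pow_pos hDpos 2)).2 hWb
    have habs : |x| ^ k ≤ 1 + |x| ^ (2 * n) := aux_abs_pow_le x k (2 * n) hk
    rw [Real.norm_eq_abs, abs_mul, abs_mul, abs_pow, abs_div,
      abs_of_pos (hθpos x), abs_of_pos (pow_pos hDpos 2)]
    calc |x| ^ k * (|(u * Q - v * P).eval x| / ((Q + ε • v).eval x) ^ 2) * θ x
        ≤ (1 + |x| ^ (2 * n)) * (4 * Mw) * θ x := by
          apply mul_le_mul_of_nonneg_right _ (hθpos x).le
          apply mul_le_mul habs hdiv (div_nonneg (abs_nonneg _) (pow_pos hDpos 2).le)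
            (by positivity)
      _ = (4 * Mw) * ((1 + |x| ^ (2 * n)) * θ x) := by ring
  -- pointwise differentiability
  have hdiff : ∀ᵐ x : ℝ, ∀ ε ∈ Metric.ball (0:ℝ) δ,
      HasDerivAt (fun ε : ℝ => x ^ k * ((P + ε • u).eval x / (Q + ε • v).eval x) * θ x)
        (x ^ k * ((u * Q - v * P).eval x / ((Q + ε • v).eval x) ^ 2) * θ x) ε := by
    filter_upwards with x
    intro ε hε
    rw [Metric.mem_ball, Real.dist_eq, sub_zero] at hε
    have hDne : (Q + ε • v).eval x ≠ 0 := (hpos ε hε x).ne'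
    have h1 : HasDerivAt (fun ε : ℝ => (P + ε • u).eval x) (u.eval x) ε := by
      have e1 : (fun ε : ℝ => (P + ε • u).eval x) = fun ε : ℝ => P.eval x + ε * u.eval x := by
        funext ε; simp [smul_eq_mul]
      rw [e1]
      simpa using ((hasDerivAt_id ε).mul_const (u.eval x)).const_add (P.eval x)
    have h2 : HasDerivAt (fun ε : ℝ => (Q + ε • v).eval x) (v.eval x) ε := by
      have e2 : (fun ε : ℝ => (Q + ε • v).eval x) = fun ε : ℝ => Q.eval x + ε * v.eval x := by
        funext ε; simp [smul_eq_mul]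
      rw [e2]
      simpa using ((hasDerivAt_id ε).mul_const (v.eval x)).const_add (Q.eval x)
    have h3 := (h1.div h2 hDne)
    have h4 := (h3.const_mul (x ^ k)).mul_const (θ x)
    have heq : x ^ k * ((u.eval x * (Q + ε • v).eval x - (P + ε • u).eval x * v.eval x) /
          ((Q + ε • v).eval x) ^ 2) * θ x
        = x ^ k * ((u * Q - v * P).eval x / ((Q + ε • v).eval x) ^ 2) * θ x := by
      simp only [Polynomial.eval_add, Polynomial.eval_sub, Polynomial.eval_mul,
        Polynomial.eval_smul, smul_eq_mul]
      ring
    rw [← heq]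
    exact h4
  have key := hasDerivAt_integral_of_dominated_loc_of_deriv_le (μ := volume)
    (F := fun ε x => x ^ k * ((P + ε • u).eval x / (Q + ε • v).eval x) * θ x)
    (F' := fun ε x => x ^ k * ((u * Q - v * P).eval x / ((Q + ε • v).eval x) ^ 2) * θ x)
    (x₀ := (0:ℝ)) (bound := fun x : ℝ => (4 * Mw) * ((1 + |x| ^ (2 * n)) * θ x))
    (Metric.ball_mem_nhds 0 hδ) (Eventually.of_forall hmeasF) hint0 (hmeasF' 0) hbound (hθint.const_mul (4 * Mw)) hdiff
  have hieq : (∫ x : ℝ, x ^ k * (u.eval x * Q.eval x - v.eval x * P.eval x) * θ x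
        / (Q.eval x) ^ 2)
      = ∫ x : ℝ, x ^ k * ((u * Q - v * P).eval x / ((Q + (0:ℝ) • v).eval x) ^ 2) * θ x := by
    apply integral_congr_ae
    filter_upwards with x
    simp only [zero_smul, add_zero, Polynomial.eval_sub, Polynomial.eval_mul]
    ring
  rw [hieq]
  exact key.2
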